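/- Let m > 1 be an integer, and let a, b, c₁, …, c_n be positive integers such that for all i ≠ j, gcd(c_i, c_j) = 1 and for every integer y, gcd(ay+b, ∏_{i<j}(c_i^m − c_j^m)) = 1 and gcd(c_i, (ay+b)^m + (−1)^{n−1}∏_{j≠i} c_j^m) = 1. Fix y ∈ ℤ and let x be a root of g(X) = X(ay+b)^m + ∏_{i=1}^n (X − c_i^m), and k = ℚ(x). Then each ideal (x − c_i^m) of 𝒪_k is an m-th power of a fractional ideal. -/

import Mathlib

open UniqueFactorizationMonoid

section Helpers

variable {R : Type*} [CommRing R] [IsDedekindDomain R] [DecidableEq (Ideal R)]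

lemma pow_dvd_iff_le_count {I p : Ideal R} (hI : I ≠ 0) (hp : p.IsPrime) (hp0 : p ≠ ⊥)
    (k : ℕ) : p ^ k ∣ I ↔ k ≤ (normalizedFactors I).count p := by
  classical
  have hirr : Irreducible (Associates.mk p) :=
    (Associates.irreducible_mk).mpr (Ideal.prime_of_isPrime hp0 hp).irreducible
  rw [← Associates.mk_dvd_mk, Associates.mk_pow]
  simp only [Associates.dvd_eq_le]
  rw [Associates.prime_pow_dvd_iff_le (Associates.mk_ne_zero.mpr hI) hirr,
    count_associates_factors_eq hI hp hp0]
  convert Iff.rfl using 3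

lemma mem_pow_iff_le_count {α : R} (hα : α ≠ 0) {p : Ideal R} (hp : p.IsPrime) (hp0 : p ≠ ⊥)
    (k : ℕ) : α ∈ p ^ k ↔ k ≤ (normalizedFactors (Ideal.span {α})).count p := by
  rw [← pow_dvd_iff_le_count (by simpa [Ne, Ideal.span_singleton_eq_bot] using hα) hp hp0,
    Ideal.dvd_iff_le, Ideal.span_singleton_le_iff_mem]

lemma count_nf_mul {I J : Ideal R} (hI : I ≠ 0) (hJ : J ≠ 0) (p : Ideal R) :
    (normalizedFactors (I * J)).count p
      = (normalizedFactors I).count p + (normalizedFactors J).count p := by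
  rw [normalizedFactors_mul hI hJ, Multiset.count_add]

lemma count_nf_pow {I : Ideal R} (hI : I ≠ 0) (k : ℕ) (p : Ideal R) :
    (normalizedFactors (I ^ k)).count p = k * (normalizedFactors I).count p := by
  rw [normalizedFactors_pow, Multiset.count_nsmul]

lemma count_nf_prod {ι : Type*} (s : Finset ι) (f : ι → Ideal R) (hf : ∀ j ∈ s, f j ≠ 0)
    (p : Ideal R) :
    (normalizedFactors (∏ j ∈ s, f j)).count p
      = ∑ j ∈ s, (normalizedFactors (f j)).count p := by
  classical
  induction s using Finset.induction_on with
  | empty =>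
    simp only [Finset.prod_empty, Finset.sum_empty]
    rw [normalizedFactors_one]
    simp
  | @insert a s' ha ih =>
    rw [Finset.prod_insert ha, count_nf_mul (hf a (by simp))
      (Finset.prod_ne_zero_iff.mpr fun j hj => hf j (by simp [hj])), Finset.sum_insert ha,
      ih fun j hj => hf j (by simp [hj])]

lemma count_nf_eq_zero {I p : Ideal R} (h : ¬ I ≤ p) :
    (normalizedFactors I).count p = 0 := by
  rw [Multiset.count_eq_zero]
  exact fun hmem => h (Ideal.le_of_dvd (dvd_of_mem_normalizedFactors hmem))

lemma le_of_count_nf_pos {I p : Ideal R} (h : 0 < (normalizedFactors I).count p) : I ≤ p := by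
  by_contra hc
  simp [count_nf_eq_zero hc] at h

lemma eq_pow_of_count_dvd {J : Ideal R} (hJ : J ≠ 0) (m : ℕ)
    (h : ∀ p ∈ normalizedFactors J, m ∣ (normalizedFactors J).count p) :
    ∃ I : Ideal R, J = I ^ m := by
  classical
  have hassoc := prod_normalizedFactors hJ
  rw [associated_iff_eq] at hassoc
  refine ⟨∏ p ∈ (normalizedFactors J).toFinset, p ^ ((normalizedFactors J).count p / m), ?_⟩
  have key : (∏ p ∈ (normalizedFactors J).toFinset,
      p ^ ((normalizedFactors J).count p / m)) ^ m
      = ∏ p ∈ (normalizedFactors J).toFinset, p ^ ((normalizedFactors J).count p) := by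
    rw [← Finset.prod_pow]
    refine Finset.prod_congr rfl fun p hp => ?_
    rw [← pow_mul, Nat.div_mul_cancel (h p (Multiset.mem_toFinset.mp hp))]
  rw [key, ← Finset.prod_multiset_count, hassoc]

end Helpers

lemma pow_gap_aux : ∀ m : ℕ, 2 ≤ m → ∀ u v : ℤ, 0 < v → v < u → v ^ m + 2 ≤ u ^ m := by
  intro m hm
  induction m, hm using Nat.le_induction with
  | base => intro u v hv huv; nlinarith
  | succ m hm ih =>
    intro u v hv huv
    have h1 := ih u v hv huv
    have h2 : (1:ℤ) ≤ v ^ m := one_le_pow₀ hv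
    have hu : 0 < u := hv.trans huv
    calc v ^ (m+1) + 2 = v * v ^ m + 2 := by ring
    _ ≤ u * u ^ m := by nlinarith
    _ = u ^ (m+1) := by ring

lemma pow_sub_pow_not_unit {m : ℕ} (hm : 1 < m) {u v : ℤ} (hu : 0 < u) (hv : 0 < v) :
    ¬ IsUnit (u ^ m - v ^ m) := by
  intro h
  rcases Int.isUnit_iff.mp h with h1 | h1
  · rcases lt_trichotomy u v with hlt | he | hlt
    · have := pow_gap_aux m hm v u hu hlt; omega
    · rw [he] at h1; omega
    · have := pow_gap_aux m hm u v hv hlt; omega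
  · rcases lt_trichotomy u v with hlt | he | hlt
    · have := pow_gap_aux m hm v u hu hlt; omega
    · rw [he] at h1; omega
    · have := pow_gap_aux m hm u v hv hlt; omega

lemma not_both_mem_of_isCoprime {R : Type*} [CommRing R] {s t : ℤ} (h : IsCoprime s t)
    {p : Ideal R} (hp : p.IsPrime) (hs : ((s : ℤ) : R) ∈ p) (ht : ((t : ℤ) : R) ∈ p) :
    False := by
  obtain ⟨uu, vv, huv⟩ := h
  have : ((uu * s + vv * t : ℤ) : R) ∈ p := by
    push_cast
    exact add_mem (p.mul_mem_left _ hs) (p.mul_mem_left _ ht)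
  rw [huv] at this
  exact hp.ne_top ((Ideal.eq_top_iff_one p).mpr (by simpa using this))

open Polynomial in
lemma isIntegral_of_root {K : Type*} [Field K] {n : ℕ} (hn : 1 < n) (k : ℤ) (d : Fin n → ℤ)
    (x : K) (hx : x * ((k : ℤ) : K) + ∏ i, (x - ((d i : ℤ) : K)) = 0) : IsIntegral ℤ x := by
  have hdeg : (∏ i, (X - C (d i)) : ℤ[X]).degree = n := by
    rw [Polynomial.degree_prod, Finset.sum_congr rfl (fun i _ => Polynomial.degree_X_sub_C (d i))]
    simp
  have hmonic : (∏ i, (X - C (d i)) + C k * X : ℤ[X]).Monic := by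
    refine Polynomial.Monic.add_of_left
      (monic_prod_of_monic _ _ fun i _ => monic_X_sub_C (d i)) ?_
    rw [hdeg]
    calc (C k * X : ℤ[X]).degree ≤ (C k : ℤ[X]).degree + (X : ℤ[X]).degree :=
          Polynomial.degree_mul_le _ _
    _ ≤ 0 + 1 := add_le_add degree_C_le degree_X_le
    _ < n := by
        rw [zero_add]
        exact_mod_cast hn
  refine ⟨∏ i, (X - C (d i)) + C k * X, hmonic, ?_⟩
  rw [← Polynomial.aeval_def]
  simp only [map_add, map_mul, map_prod, map_sub, Polynomial.aeval_X, Polynomial.aeval_C,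
    algebraMap_int_eq, eq_intCast, map_intCast]
  linear_combination hx

lemma prod_sub_mem_span' {R : Type*} [CommRing R] {ι : Type*} (s : Finset ι) (χ : R)
    (g : ι → R) : ∃ A : R, ∏ j ∈ s, (χ - g j) = ∏ j ∈ s, (- g j) + χ * A := by
  classical
  induction s using Finset.induction_on with
  | empty => exact ⟨0, by simp⟩
  | @insert a s' ha ih =>
    obtain ⟨A, hA⟩ := ih
    refine ⟨∏ j ∈ s', (- g j) + (χ - g a) * A, ?_⟩
    rw [Finset.prod_insert ha, Finset.prod_insert ha, hA]
    ring

set_option maxHeartbeats 1000000 in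
set_option synthInstance.maxHeartbeats 200000 in
open NumberField in
/-- Specialization of the coprimality lemma to the curve
`x(ay+b)^m = −∏ (x − c_i^m)`: under the stated positivity and coprimality conditions,
for any integer `y`, if `x` is a root of `X(ay+b)^m + ∏ (X − c_i^m)` and `K = ℚ(x)`,
then each ideal `(x − c_i^m)` of `𝒪_K` is an `m`-th power of a fractional ideal. -/
theorem stmt_17 (m n : ℕ) (hm : 1 < m) (hn : 1 < n)
    (a b : ℤ) (c : Fin n → ℤ) (hapos : 0 < a) (hbpos : 0 < b) (hcpos : ∀ i, 0 < c i)
    (hcc : ∀ i j, i ≠ j → IsCoprime (c i) (c j))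
    (h1 : ∀ y : ℤ, ∀ i j : Fin n, i ≠ j →
      IsCoprime (a * y + b) (c i ^ m - c j ^ m))
    (h2 : ∀ y : ℤ, ∀ i, IsCoprime (c i)
      ((a * y + b) ^ m + (-1) ^ (n - 1) * ∏ j ∈ Finset.univ.erase i, c j ^ m))
    (y : ℤ)
    (K : Type*) [Field K] [NumberField K] (x : K)
    (hx : x * ((a * y + b : ℤ) : K) ^ m + ∏ i, (x - (c i : K) ^ m) = 0)
    (hgen : IntermediateField.adjoin ℚ {x} = ⊤) :
    ∀ i, ∃ I : FractionalIdeal (nonZeroDivisors (RingOfIntegers K)) K,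
      FractionalIdeal.spanSingleton (nonZeroDivisors (RingOfIntegers K))
        (x - (c i : K) ^ m) = I ^ m := by
  classical
  intro i
  -- `x` is an algebraic integer
  have hxint : IsIntegral ℤ x := by
    refine isIntegral_of_root hn ((a * y + b) ^ m) (fun j => c j ^ m) x ?_
    push_cast
    push_cast at hx
    linear_combination hx
  set χ : 𝓞 K := ⟨x, hxint⟩ with hχdef
  set β : 𝓞 K := ((a * y + b : ℤ) : 𝓞 K) with hβdef
  set γ : Fin n → 𝓞 K := fun j => ((c j : ℤ) : 𝓞 K) with hγdef
  set ξ : Fin n → 𝓞 K := fun j => χ - γ j ^ m with hξdef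
  have hcast : ∀ j, (algebraMap (𝓞 K) K) (ξ j) = x - (c j : K) ^ m := by
    intro j
    simp only [hξdef, hγdef, map_sub, map_pow, map_intCast,
      NumberField.RingOfIntegers.map_mk]
    rfl
  have heq : χ * β ^ m + ∏ j, ξ j = 0 := by
    apply NumberField.RingOfIntegers.ext
    rw [NumberField.RingOfIntegers.coe_eq_algebraMap]
    rw [map_add, map_mul, map_pow, map_prod]
    simp only [hcast, hβdef, map_intCast]
    have hχx : (algebraMap (𝓞 K) K) χ = x := rfl
    rw [hχx]
    simpa using hx
  -- nonvanishing
  have habz : a * y + b ≠ 0 := by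
    intro h0
    have h01 : (⟨0, by omega⟩ : Fin n) ≠ ⟨1, by omega⟩ := by simp [Fin.ext_iff]
    have hco := h1 y _ _ h01
    rw [h0] at hco
    exact pow_sub_pow_not_unit hm (hcpos _) (hcpos _) (isCoprime_zero_left.mp hco)
  have hβ : β ≠ 0 := by
    rw [hβdef]
    exact_mod_cast habz
  have hγ : ∀ j, γ j ≠ 0 := by
    intro j
    have hne : ((c j : ℤ) : 𝓞 K) ≠ 0 := by exact_mod_cast (hcpos j).ne'
    simpa [hγdef] using hne
  have hξ : ∀ j, ξ j ≠ 0 := by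
    intro j hj0
    have heq' := heq
    rw [Finset.prod_eq_zero (Finset.mem_univ j) hj0, add_zero] at heq'
    have hχe : χ = γ j ^ m := by simp only [hξdef] at hj0; rwa [sub_eq_zero] at hj0
    exact mul_ne_zero (hχe ▸ pow_ne_zero m (hγ j)) (pow_ne_zero m hβ) heq'
  have hχ0 : χ ≠ 0 := by
    intro h0
    have heq' := heq
    rw [h0, zero_mul, zero_add] at heq'
    obtain ⟨j, _, hj⟩ := Finset.prod_eq_zero_iff.mp heq'
    exact hξ j hj
  have hspan : ∀ t : 𝓞 K, t ≠ 0 → Ideal.span {t} ≠ 0 := by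
    intro t ht h
    rw [Submodule.zero_eq_bot, Ideal.span_singleton_eq_bot] at h
    exact ht h
  -- the ideal-level equation
  have hIdeal : Ideal.span {χ} * Ideal.span {β} ^ m = ∏ j, Ideal.span {ξ j} := by
    rw [Ideal.span_singleton_pow, Ideal.span_singleton_mul_span_singleton,
      Ideal.prod_span_singleton, eq_neg_of_add_eq_zero_left heq, Ideal.span_singleton_neg]
  -- reduce to an integral ideal statement
  suffices hsuff : ∃ I : Ideal (𝓞 K), Ideal.span {ξ i} = I ^ m by
    obtain ⟨I, hI⟩ := hsuff
    refine ⟨(I : FractionalIdeal (nonZeroDivisors (𝓞 K)) K), ?_⟩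
    rw [← hcast i, ← FractionalIdeal.coeIdeal_span_singleton, hI,
      FractionalIdeal.coeIdeal_pow]
  refine eq_pow_of_count_dvd (hspan _ (hξ i)) m ?_
  intro p hpmem
  have hpprime : Prime p := prime_of_normalized_factor p hpmem
  have hpP : p.IsPrime := Ideal.isPrime_of_prime hpprime
  have hp0 : p ≠ ⊥ := by
    simpa using hpprime.ne_zero
  have hξip : ξ i ∈ p := by
    have hdvd := dvd_of_mem_normalizedFactors hpmem
    exact (Ideal.span_singleton_le_iff_mem _).mp (Ideal.le_of_dvd hdvd)
  -- claim A: no other ξ j lies in p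
  have claimA : ∀ j, j ≠ i → ξ j ∉ p := by
    intro j hji hmemj
    have hdmem : ((c i ^ m - c j ^ m : ℤ) : 𝓞 K) ∈ p := by
      have he : ((c i ^ m - c j ^ m : ℤ) : 𝓞 K) = ξ j - ξ i := by
        simp only [hξdef, hγdef]
        push_cast
        ring
      rw [he]
      exact sub_mem hmemj hξip
    have hprodmem : χ * β ^ m ∈ p := by
      have hfac : ∏ t, ξ t ∈ p := by
        obtain ⟨t, ht⟩ := Finset.dvd_prod_of_mem ξ (Finset.mem_univ j)
        rw [ht]
        exact Ideal.mul_mem_right _ _ hmemj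
      rw [eq_neg_of_add_eq_zero_left heq]
      exact neg_mem hfac
    rcases hpP.mem_or_mem hprodmem with hc | hc
    · have hγi : γ i ∈ p := hpP.mem_of_pow_mem m (by
        have he : γ i ^ m = χ - ξ i := by simp only [hξdef]; ring
        rw [he]; exact sub_mem hc hξip)
      have hγj : γ j ∈ p := hpP.mem_of_pow_mem m (by
        have he : γ j ^ m = χ - ξ j := by simp only [hξdef]; ring
        rw [he]; exact sub_mem hc hmemj)
      rw [hγdef] at hγi hγj
      exact not_both_mem_of_isCoprime (hcc i j (Ne.symm hji)) hpP hγi hγj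
    · have hβp : β ∈ p := hpP.mem_of_pow_mem m hc
      rw [hβdef] at hβp
      exact not_both_mem_of_isCoprime (h1 y i j (Ne.symm hji)) hpP hβp hdmem
  -- count bookkeeping
  have hcount : (normalizedFactors (Ideal.span {ξ i})).count p
      = (normalizedFactors (Ideal.span {χ})).count p
        + m * (normalizedFactors (Ideal.span {β})).count p := by
    have h3 := congrArg (fun I => (normalizedFactors I).count p) hIdeal
    rw [count_nf_mul (hspan _ hχ0) (pow_ne_zero m (hspan _ hβ)), count_nf_pow (hspan _ hβ),
      count_nf_prod _ _ (fun j _ => hspan _ (hξ j))] at h3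
    rw [Finset.sum_eq_single i
      (fun j _ hji => count_nf_eq_zero
        (fun hle => claimA j hji ((Ideal.span_singleton_le_iff_mem _).mp hle)))
      (by simp)] at h3
    exact h3.symm
  rw [hcount]
  refine dvd_add ?_ (Dvd.intro _ rfl)
  set u := (normalizedFactors (Ideal.span {χ})).count p with hu
  by_cases hu0 : u = 0
  · simp [hu0]
  have hχp : χ ∈ p := (Ideal.span_singleton_le_iff_mem _).mp
    (le_of_count_nf_pos (by omega))
  have hγip : γ i ∈ p := hpP.mem_of_pow_mem m (by
    have he : γ i ^ m = χ - ξ i := by simp only [hξdef]; ring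
    rw [he]; exact sub_mem hχp hξip)
  set D : ℤ := (a * y + b) ^ m + (-1) ^ (n - 1) * ∏ j ∈ Finset.univ.erase i, c j ^ m with hD
  have hDp : ((D : ℤ) : 𝓞 K) ∉ p := by
    intro hmem
    have := hγip
    rw [hγdef] at this
    exact not_both_mem_of_isCoprime (h2 y i) hpP this hmem
  have hDne : ((D : ℤ) : 𝓞 K) ≠ 0 := by
    intro h0
    exact hDp (h0 ▸ p.zero_mem)
  set P : 𝓞 K := ∏ j ∈ Finset.univ.erase i, γ j ^ m with hPdef
  have hPne : P ≠ 0 := Finset.prod_ne_zero_iff.mpr fun j _ => pow_ne_zero m (hγ j)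
  have hPp : P ∉ p := by
    intro hmem
    rw [hPdef] at hmem
    obtain ⟨j, hjmem, hj⟩ := (Ideal.IsPrime.prod_mem_iff (hp := hpP)).mp hmem
    have hγjp : γ j ∈ p := hpP.mem_of_pow_mem m hj
    have hjne : j ≠ i := (Finset.mem_erase.mp hjmem).1
    rw [hγdef] at hγjp
    have hγip' := hγip
    rw [hγdef] at hγip'
    exact not_both_mem_of_isCoprime (hcc j i hjne) hpP hγjp hγip'
  have hDcast : ((D : ℤ) : 𝓞 K) = β ^ m + (-1) ^ (n - 1) * P := by
    rw [hD, hPdef, hβdef]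
    simp only [hγdef]
    push_cast
    ring
  -- extract the auxiliary element A
  obtain ⟨A, hA⟩ : ∃ A : 𝓞 K,
      ∏ j ∈ Finset.univ.erase i, ξ j = (-1) ^ (n - 1) * P + χ * A := by
    obtain ⟨A, hA⟩ := prod_sub_mem_span' (Finset.univ.erase i) χ (fun j => γ j ^ m)
    refine ⟨A, ?_⟩
    have hcard : (Finset.univ.erase i).card = n - 1 := by
      rw [Finset.card_erase_of_mem (Finset.mem_univ i), Finset.card_univ, Fintype.card_fin]
    have hneg : ∏ j ∈ Finset.univ.erase i, (- γ j ^ m) = (-1) ^ (n - 1) * P := by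
      rw [hPdef, ← hcard, ← Finset.prod_const, ← Finset.prod_mul_distrib]
      exact Finset.prod_congr rfl fun j _ => by ring
    have hξeq : ∏ j ∈ Finset.univ.erase i, ξ j
        = ∏ j ∈ Finset.univ.erase i, (χ - γ j ^ m) := by
      simp only [hξdef]
    rw [hξeq, hA, hneg]
  -- the key element identity
  have hsplit : ∏ j, ξ j = ξ i * ∏ j ∈ Finset.univ.erase i, ξ j :=
    (Finset.mul_prod_erase Finset.univ ξ (Finset.mem_univ i)).symm
  have hγm : γ i ^ m = χ - ξ i := by simp only [hξdef]; ring
  have hkey : χ * ((D : ℤ) : 𝓞 K) + ξ i * (χ * A)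
      = (-1) ^ (n - 1) * (γ i ^ m * P) := by
    rw [hDcast]
    linear_combination heq - hsplit - ξ i * hA - ((-1 : 𝓞 K) ^ (n - 1) * P) * hγm
  -- memberships in powers of p
  have hχmem : χ ∈ p ^ u := (mem_pow_iff_le_count hχ0 hpP hp0 u).mpr le_rfl
  have hχnotmem : χ ∉ p ^ (u + 1) := by
    intro hmem
    have := (mem_pow_iff_le_count hχ0 hpP hp0 (u + 1)).mp hmem
    omega
  have hRHSmem : (-1 : 𝓞 K) ^ (n - 1) * (γ i ^ m * P) ∈ p ^ u := by
    rw [← hkey]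
    exact add_mem (Ideal.mul_mem_right _ _ hχmem)
      (Ideal.mul_mem_left _ _ (Ideal.mul_mem_right _ _ hχmem))
  have hone : ((-1 : 𝓞 K) ^ (n - 1)) * ((-1 : 𝓞 K) ^ (n - 1)) = 1 := by
    rw [← pow_add]
    exact Even.neg_one_pow ⟨n - 1, by ring⟩
  have hGP : γ i ^ m * P ∈ p ^ u := by
    have h2' := Ideal.mul_mem_left (p ^ u) ((-1 : 𝓞 K) ^ (n - 1)) hRHSmem
    rwa [← mul_assoc, hone, one_mul] at h2'
  have hGPne : γ i ^ m * P ≠ 0 := mul_ne_zero (pow_ne_zero m (hγ i)) hPne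
  set w := (normalizedFactors (Ideal.span {γ i})).count p with hw
  have hcntGP : (normalizedFactors (Ideal.span {γ i ^ m * P})).count p = m * w := by
    rw [← Ideal.span_singleton_mul_span_singleton, ← Ideal.span_singleton_pow,
      count_nf_mul (pow_ne_zero m (hspan _ (hγ i))) (hspan _ hPne),
      count_nf_pow (hspan _ (hγ i)),
      count_nf_eq_zero (fun hle => hPp ((Ideal.span_singleton_le_iff_mem _).mp hle)), add_zero]
  have hle1 : u ≤ m * w := by
    have := (mem_pow_iff_le_count hGPne hpP hp0 u).mp hGP
    rwa [hcntGP] at this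
  have hge1 : m * w ≤ u := by
    by_contra hcon
    push_neg at hcon
    have hmemGP : γ i ^ m * P ∈ p ^ (u + 1) := by
      refine (mem_pow_iff_le_count hGPne hpP hp0 (u + 1)).mpr ?_
      rw [hcntGP]
      omega
    have h5 : ξ i * (χ * A) ∈ p ^ (u + 1) := by
      have h6 := Ideal.mul_mem_mul hξip (Ideal.mul_mem_right A _ hχmem)
      rwa [← pow_succ'] at h6
    have h6 : χ * ((D : ℤ) : 𝓞 K) ∈ p ^ (u + 1) := by
      have hre : χ * ((D : ℤ) : 𝓞 K)
          = (-1) ^ (n - 1) * (γ i ^ m * P) - ξ i * (χ * A) := by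
        linear_combination hkey
      rw [hre]
      exact sub_mem (Ideal.mul_mem_left _ _ hmemGP) h5
    have h7 := (mem_pow_iff_le_count (mul_ne_zero hχ0 hDne) hpP hp0 (u + 1)).mp h6
    rw [← Ideal.span_singleton_mul_span_singleton,
      count_nf_mul (hspan _ hχ0) (hspan _ hDne),
      count_nf_eq_zero (fun hle => hDp ((Ideal.span_singleton_le_iff_mem _).mp hle)),
      add_zero] at h7
    omega
  have : u = m * w := le_antisymm hle1 hge1
  exact ⟨w, this⟩
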